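/- Let x ∈ K. Then x ∉ U if and only if there exist N ≥ 0, a finite word (i_1,…,i_N) ∈ {1,…,m}^N, and distinct digits k, l ∈ {1,…,m} such that T_{i_1…i_N k}(x) ∈ K and T_{i_1…i_N l}(x) ∈ K. -/

import Mathlib

open Filter Topology Set

/-- `ifsIter m f i n = f_{i₁} ∘ ⋯ ∘ f_{iₙ} (0)`. -/
noncomputable def ifsIter (m : ℕ) (f : Fin m → ℝ → ℝ) : (ℕ → Fin m) → ℕ → ℝ
  | _, 0 => 0
  | i, n + 1 => f (i 0) (ifsIter m f (fun k => i (k + 1)) n)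

/-- Apply `T_{i₁…i_N}` (i.e. `T_{i_N} ∘ ⋯ ∘ T_{i₁}`) to `x`, where the word is a list. -/
noncomputable def invIterWord (m : ℕ) (T : Fin m → ℝ → ℝ) (w : List (Fin m)) (x : ℝ) : ℝ :=
  w.foldl (fun y j => T j y) x

namespace Stmt2Aux

variable {m : ℕ}

/-- Forward composition along a word: `fwd f [j₁,…,jₙ] x = f_{j₁} (… (f_{jₙ} x))`. -/
noncomputable def fwd (f : Fin m → ℝ → ℝ) (w : List (Fin m)) (x : ℝ) : ℝ :=
  w.foldr (fun j y => f j y) x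

/-- The first `n` digits of a sequence, as a list. -/
def pre (i : ℕ → Fin m) (n : ℕ) : List (Fin m) := (List.range n).map i

/-- Extend a finite word by an infinite sequence. -/
def ext (u : List (Fin m)) (j : ℕ → Fin m) : ℕ → Fin m :=
  fun n => if h : n < u.length then u[n] else j (n - u.length)

lemma fwd_nil (f : Fin m → ℝ → ℝ) (x : ℝ) : fwd f [] x = x := rfl

lemma fwd_cons (f : Fin m → ℝ → ℝ) (j : Fin m) (w : List (Fin m)) (x : ℝ) :
    fwd f (j :: w) x = f j (fwd f w x) := rfl

lemma fwd_append (f : Fin m → ℝ → ℝ) (u v : List (Fin m)) (x : ℝ) :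
    fwd f (u ++ v) x = fwd f u (fwd f v x) := List.foldr_append ..

lemma inv_nil (T : Fin m → ℝ → ℝ) (x : ℝ) : invIterWord m T [] x = x := rfl

lemma inv_cons (T : Fin m → ℝ → ℝ) (j : Fin m) (w : List (Fin m)) (x : ℝ) :
    invIterWord m T (j :: w) x = invIterWord m T w (T j x) := rfl

lemma inv_append (T : Fin m → ℝ → ℝ) (u v : List (Fin m)) (x : ℝ) :
    invIterWord m T (u ++ v) x = invIterWord m T v (invIterWord m T u x) :=
  List.foldl_append ..

lemma inv_concat (T : Fin m → ℝ → ℝ) (u : List (Fin m)) (k : Fin m) (x : ℝ) :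
    invIterWord m T (u ++ [k]) x = T k (invIterWord m T u x) := by
  rw [inv_append]; rfl

lemma pre_zero (i : ℕ → Fin m) : pre i 0 = [] := rfl

lemma pre_succ (i : ℕ → Fin m) (n : ℕ) : pre i (n + 1) = pre i n ++ [i n] := by
  simp [pre, List.range_succ]

lemma pre_length (i : ℕ → Fin m) (n : ℕ) : (pre i n).length = n := by simp [pre]

lemma pre_add (i : ℕ → Fin m) (n p : ℕ) :
    pre i (n + p) = pre i n ++ pre (fun k => i (n + k)) p := by
  simp [pre, List.range_add, List.map_map, Function.comp_def]

lemma ifsIter_eq (f : Fin m → ℝ → ℝ) : ∀ (n : ℕ) (i : ℕ → Fin m),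
    ifsIter m f i n = fwd f (pre i n) 0 := by
  intro n
  induction n with
  | zero => intro i; rfl
  | succ n ih =>
    intro i
    show f (i 0) (ifsIter m f (fun k => i (k + 1)) n) = _
    rw [ih]
    have : pre i (n + 1) = i 0 :: pre (fun k => i (k + 1)) n := by
      simp [pre, List.range_succ_eq_map, List.map_map, Function.comp_def]
    rw [this, fwd_cons]

lemma pre_ext_of_le {u : List (Fin m)} {j : ℕ → Fin m} {n : ℕ} (h : n ≤ u.length) :
    pre (ext u j) n = u.take n := by
  apply List.ext_getElem
  · simp [pre]; omega
  · intro p h1 h2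
    rw [pre_length] at h1
    simp only [pre, List.getElem_map, List.getElem_range, List.getElem_take]
    exact dif_pos (lt_of_lt_of_le h1 h)

lemma pre_ext_add (u : List (Fin m)) (j : ℕ → Fin m) (p : ℕ) :
    pre (ext u j) (u.length + p) = u ++ pre j p := by
  unfold pre
  rw [List.range_add, List.map_append, List.map_map]
  congr 1
  · apply List.ext_getElem
    · simp
    · intro q h1 h2
      simp only [List.getElem_map, List.getElem_range]
      simp only [List.length_map, List.length_range] at h1
      exact dif_pos h1
  · apply List.ext_getElem
    · simp
    · intro q h1 h2
      simp only [List.getElem_map, List.getElem_range, Function.comp_apply]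
      have : ¬ (u.length + q < u.length) := by omega
      simp only [ext, dif_neg this]
      congr 1
      omega

lemma ext_at_length (u : List (Fin m)) (k : Fin m) (j : ℕ → Fin m) :
    ext (u ++ [k]) j u.length = k := by
  have h : u.length < (u ++ [k]).length := by simp
  simp only [ext, dif_pos h]
  exact List.getElem_concat_length rfl h

end Stmt2Aux

open Stmt2Aux in
/-- `x ∉ U` iff some finite word of inverse maps can be extended by
two distinct digits `k ≠ l` both of which map `x` back into `K`. -/
theorem stmt2 (m : ℕ) (hm : 2 ≤ m) (r a : Fin m → ℝ)
    (hr : ∀ j, 0 < r j ∧ r j < 1)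
    (f : Fin m → ℝ → ℝ) (hf : ∀ j x, f j x = r j * x + a j)
    (T : Fin m → ℝ → ℝ) (hT : ∀ j x, T j x = (x - a j) / r j)
    (K : Set ℝ) (hKne : K.Nonempty) (hKc : IsCompact K)
    (hK : K = ⋃ j, f j '' K)
    (U : Set ℝ)
    (hU : U = {x | x ∈ K ∧ ∃! i : ℕ → Fin m, Tendsto (ifsIter m f i) atTop (𝓝 x)})
    (x : ℝ) (hx : x ∈ K) :
    x ∉ U ↔ ∃ (w : List (Fin m)) (k l : Fin m), k ≠ l ∧
      T k (invIterWord m T w x) ∈ K ∧ T l (invIterWord m T w x) ∈ K := by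
  -- basic algebraic identities
  have hTf : ∀ j y, T j (f j y) = y := by
    intro j y
    rw [hf, hT, add_sub_cancel_right, mul_div_cancel_left₀ _ (hr j).1.ne']
  have hfT : ∀ j y, f j (T j y) = y := by
    intro j y
    rw [hT, hf, mul_div_cancel₀ _ (hr j).1.ne', sub_add_cancel]
  -- contraction ratio bound
  have hFinNe : Nonempty (Fin m) := ⟨⟨0, by omega⟩⟩
  obtain ⟨ρ, hρ1, hρle⟩ : ∃ ρ : ℝ, ρ < 1 ∧ ∀ j, r j ≤ ρ := by
    refine ⟨Finset.univ.sup' ⟨Classical.arbitrary (Fin m), Finset.mem_univ _⟩ r, ?_, ?_⟩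
    · exact (Finset.sup'_lt_iff _).mpr fun j _ => (hr j).2
    · exact fun j => Finset.le_sup' r (Finset.mem_univ j)
  have hρ0 : 0 ≤ ρ := le_trans (hr (Classical.arbitrary (Fin m))).1.le
    (hρle (Classical.arbitrary (Fin m)))
  -- K is invariant
  have hKinv : ∀ (j : Fin m), ∀ y ∈ K, f j y ∈ K := by
    intro j y hy
    rw [hK]
    exact mem_iUnion.mpr ⟨j, mem_image_of_mem _ hy⟩
  have fwd_mem : ∀ (w : List (Fin m)), ∀ y ∈ K, fwd f w y ∈ K := by
    intro w
    induction w with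
    | nil => intro y hy; exact hy
    | cons j w ih => intro y hy; exact hKinv j _ (ih y hy)
  -- identities between fwd and invIterWord
  have fwd_inv : ∀ (w : List (Fin m)) (y : ℝ), fwd f w (invIterWord m T w y) = y := by
    intro w
    induction w with
    | nil => intro y; rfl
    | cons j w ih => intro y; rw [inv_cons, fwd_cons, ih, hfT]
  have inv_fwd : ∀ (w : List (Fin m)) (y : ℝ), invIterWord m T w (fwd f w y) = y := by
    intro w
    induction w with
    | nil => intro y; rfl
    | cons j w ih => intro y; rw [fwd_cons, inv_cons, hTf, ih]
  -- Lipschitz bound on fwd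
  have fwd_lip : ∀ (w : List (Fin m)) (y z : ℝ),
      |fwd f w y - fwd f w z| ≤ ρ ^ w.length * |y - z| := by
    intro w
    induction w with
    | nil => intro y z; rw [fwd_nil, fwd_nil, List.length_nil, pow_zero, one_mul]
    | cons j w ih =>
      intro y z
      rw [fwd_cons, fwd_cons, hf, hf]
      have : r j * fwd f w y + a j - (r j * fwd f w z + a j)
          = r j * (fwd f w y - fwd f w z) := by ring
      rw [this, abs_mul, abs_of_nonneg (hr j).1.le]
      calc r j * |fwd f w y - fwd f w z| ≤ ρ * (ρ ^ w.length * |y - z|) :=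
            mul_le_mul (hρle j) (ih y z) (abs_nonneg _)
              (le_trans (hr j).1.le (hρle j))
        _ = ρ ^ (j :: w).length * |y - z| := by rw [List.length_cons]; ring
  -- bound on K
  obtain ⟨M, hM⟩ : ∃ M, ∀ y ∈ K, |y| ≤ M := by
    obtain ⟨C, hC⟩ := hKc.isBounded.exists_norm_le
    exact ⟨C, fun y hy => hC y hy⟩
  -- continuity of invIterWord
  have hTcont : ∀ j, Continuous (T j) := by
    intro j
    have : T j = fun y => (y - a j) / r j := funext (hT j)
    rw [this]
    fun_prop
  have inv_cont : ∀ (w : List (Fin m)), Continuous (fun y => invIterWord m T w y) := by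
    intro w
    induction w with
    | nil => exact continuous_id
    | cons j w ih =>
      have : (fun y => invIterWord m T (j :: w) y)
          = (fun y => invIterWord m T w y) ∘ (T j) := rfl
      rw [this]
      exact ih.comp (hTcont j)
  -- If all inverse iterates are in K, then the coding converges.
  have tendsto_of_mem : ∀ (i : ℕ → Fin m),
      (∀ n, invIterWord m T (pre i n) x ∈ K) → Tendsto (ifsIter m f i) atTop (𝓝 x) := by
    intro i hi
    rw [tendsto_iff_dist_tendsto_zero]
    apply squeeze_zero_norm (a := fun n => ρ ^ n * M)
    · intro n
      rw [Real.norm_eq_abs, Real.dist_eq, abs_abs, ifsIter_eq]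
      calc |fwd f (pre i n) 0 - x|
          = |fwd f (pre i n) 0 - fwd f (pre i n) (invIterWord m T (pre i n) x)| := by
            rw [fwd_inv]
        _ ≤ ρ ^ (pre i n).length * |0 - invIterWord m T (pre i n) x| := fwd_lip _ _ _
        _ = ρ ^ n * |invIterWord m T (pre i n) x| := by rw [pre_length, zero_sub, abs_neg]
        _ ≤ ρ ^ n * M := by
            exact mul_le_mul_of_nonneg_left (hM _ (hi n)) (pow_nonneg hρ0 n)
    · simpa using (tendsto_pow_atTop_nhds_zero_of_lt_one hρ0 hρ1).mul_const M
  -- If the coding converges to x, then all inverse iterates are in K.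
  have mem_of_tendsto : ∀ (i : ℕ → Fin m),
      Tendsto (ifsIter m f i) atTop (𝓝 x) → ∀ n, invIterWord m T (pre i n) x ∈ K := by
    intro i hi n
    obtain ⟨z, hz⟩ := hKne
    set w := pre i n with hw
    set Y : ℕ → ℝ := fun p => fwd f (pre (fun k => i (n + k)) p) z with hY
    have hYK : ∀ p, Y p ∈ K := fun p => fwd_mem _ z hz
    -- fwd f w (Y p) tends to x
    have key : ∀ p, |fwd f w (Y p) - ifsIter m f i (n + p)| ≤ ρ ^ p * |z| := by
      intro p
      rw [ifsIter_eq, pre_add, fwd_append]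
      calc |fwd f w (Y p) - fwd f w (fwd f (pre (fun k => i (n + k)) p) 0)|
          ≤ ρ ^ w.length * |Y p - fwd f (pre (fun k => i (n + k)) p) 0| := fwd_lip _ _ _
        _ ≤ 1 * (ρ ^ p * |z - 0|) := by
            apply mul_le_mul (pow_le_one₀ hρ0 hρ1.le) ?_ (abs_nonneg _) zero_le_one
            have := fwd_lip (pre (fun k => i (n + k)) p) z 0
            rwa [pre_length] at this
        _ = ρ ^ p * |z| := by rw [one_mul, sub_zero]
    have h2 : Tendsto (fun p => ifsIter m f i (n + p)) atTop (𝓝 x) := by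
      have := hi.comp (tendsto_add_atTop_nat n)
      simpa [Function.comp_def, Nat.add_comm] using this
    have hd : Tendsto (fun p => fwd f w (Y p) - ifsIter m f i (n + p)) atTop (𝓝 0) := by
      apply squeeze_zero_norm key
      simpa using (tendsto_pow_atTop_nhds_zero_of_lt_one hρ0 hρ1).mul_const |z|
    have h1 : Tendsto (fun p => fwd f w (Y p)) atTop (𝓝 x) := by
      have := hd.add h2
      simpa using this
    have h3 : Tendsto Y atTop (𝓝 (invIterWord m T w x)) := by
      have := ((inv_cont w).tendsto x).comp h1
      simpa [Function.comp_def, inv_fwd] using this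
    exact hKc.isClosed.mem_of_tendsto h3 (Eventually.of_forall hYK)
  -- existence of codings with all inverse iterates in K
  have hstep : ∀ y : ℝ, ∃ j : Fin m, y ∈ K → T j y ∈ K := by
    intro y
    by_cases hy : y ∈ K
    · have : y ∈ ⋃ j, f j '' K := hK ▸ hy
      obtain ⟨j, z, hzK, hzy⟩ := by simpa using this
      exact ⟨j, fun _ => by rw [← hzy, hTf]; exact hzK⟩
    · exact ⟨Classical.arbitrary (Fin m), fun h => absurd h hy⟩
  choose step hstepP using hstep
  have exists_coding : ∀ z ∈ K, ∃ i : ℕ → Fin m,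
      ∀ n, invIterWord m T (pre i n) z ∈ K := by
    intro z hz
    set Y : ℕ → ℝ := fun n => Nat.rec z (fun _ y => T (step y) y) n with hYdef
    refine ⟨fun n => step (Y n), ?_⟩
    have key : ∀ n, Y n ∈ K ∧ invIterWord m T (pre (fun n => step (Y n)) n) z = Y n := by
      intro n
      induction n with
      | zero => exact ⟨hz, rfl⟩
      | succ n ih =>
        refine ⟨hstepP _ ih.1, ?_⟩
        rw [pre_succ, inv_concat, ih.2]
    intro n
    rw [(key n).2]
    exact (key n).1
  -- inverse iterates along prefixes of a word
  have inv_take_mem : ∀ (u : List (Fin m)), invIterWord m T u x ∈ K →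
      ∀ p, invIterWord m T (u.take p) x ∈ K := by
    intro u hu p
    have heq : fwd f (u.drop p) (invIterWord m T u x) = invIterWord m T (u.take p) x := by
      calc fwd f (u.drop p) (invIterWord m T u x)
          = fwd f (u.drop p)
            (invIterWord m T (u.drop p) (invIterWord m T (u.take p) x)) := by
            rw [← inv_append, List.take_append_drop]
        _ = invIterWord m T (u.take p) x := fwd_inv _ _
    rw [← heq]
    exact fwd_mem _ _ hu
  constructor
  · -- x ∉ U → two digits
    intro hxU
    rw [hU] at hxU
    obtain ⟨i0, hi0⟩ := exists_coding x hx
    have hT0 : Tendsto (ifsIter m f i0) atTop (𝓝 x) := tendsto_of_mem i0 hi0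
    have hnu : ¬ ∃! i : ℕ → Fin m, Tendsto (ifsIter m f i) atTop (𝓝 x) :=
      fun h => hxU ⟨hx, h⟩
    obtain ⟨i1, hT1, hne⟩ : ∃ i1, Tendsto (ifsIter m f i1) atTop (𝓝 x) ∧ i1 ≠ i0 := by
      by_contra h
      push_neg at h
      exact hnu ⟨i0, hT0, fun y hy => h y hy⟩
    have hex : ∃ n, i1 n ≠ i0 n := by
      by_contra h
      push_neg at h
      exact hne (funext h)
    set N := Nat.find hex with hN
    have hkl : i1 N ≠ i0 N := Nat.find_spec hex
    have hagree : ∀ q < N, i1 q = i0 q := fun q hq => not_not.mp (Nat.find_min hex hq)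
    have hpre : pre i1 N = pre i0 N := by
      apply List.map_congr_left
      intro q hq
      exact hagree q (List.mem_range.mp hq)
    refine ⟨pre i0 N, i1 N, i0 N, hkl, ?_, ?_⟩
    · have := mem_of_tendsto i1 hT1 (N + 1)
      rwa [pre_succ, hpre, inv_concat] at this
    · have := mem_of_tendsto i0 hT0 (N + 1)
      rwa [pre_succ, inv_concat] at this
  · -- two digits → x ∉ U
    rintro ⟨w, k, l, hkl, hkK, hlK⟩
    have build : ∀ d : Fin m, T d (invIterWord m T w x) ∈ K →
        ∃ s : ℕ → Fin m, s w.length = d ∧ Tendsto (ifsIter m f s) atTop (𝓝 x) := by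
      intro d hd
      set u := w ++ [d] with hu
      have huinv : invIterWord m T u x ∈ K := by rw [hu, inv_concat]; exact hd
      obtain ⟨j, hj⟩ := exists_coding _ huinv
      refine ⟨ext u j, ext_at_length w d j, ?_⟩
      apply tendsto_of_mem
      intro n
      rcases le_or_gt n u.length with h | h
      · rw [pre_ext_of_le h]
        exact inv_take_mem u huinv n
      · have hn : n = u.length + (n - u.length) := by omega
        rw [hn, pre_ext_add, inv_append]
        exact hj _
    obtain ⟨s1, hs1, hs1T⟩ := build k hkK
    obtain ⟨s2, hs2, hs2T⟩ := build l hlK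
    rw [hU]
    rintro ⟨-, i0, hi0, huniq⟩
    exact hkl (by rw [← hs1, ← hs2, huniq s1 hs1T, huniq s2 hs2T])
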